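/- Let μ be a finite measure on a measurable space S with total mass |S| > 0, let g : S → ℝ be measurable, and let a ∈ ℝ with |a| < 1. Then there exists a unique c ∈ ℝ such that ∫ (e^{g(x)+c} - 1)/(e^{g(x)+c} + 1) dμ(x) = a·|S|, provided that g is μ-integrable (or, more generally, such that the integrand is integrable for every c). -/

import Mathlib

open MeasureTheory Filter Real

noncomputable def phi5 (t : ℝ) : ℝ := (Real.exp t - 1) / (Real.exp t + 1)

lemma phi5_pos_den (t : ℝ) : 0 < Real.exp t + 1 := by positivity

lemma phi5_eq (t : ℝ) : phi5 t = 1 - 2 / (Real.exp t + 1) := by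
  have h := (phi5_pos_den t).ne'
  field_simp [phi5]
  have h2 : phi5 t * (rexp t + 1) = rexp t - 1 := by rw [phi5]; exact div_mul_cancel₀ _ h
  linarith

lemma phi5_abs_le (t : ℝ) : |phi5 t| ≤ 1 := by
  have h1 : 0 < Real.exp t + 1 := phi5_pos_den t
  have h2 : 0 < Real.exp t := Real.exp_pos t
  rw [abs_le, phi5]
  constructor
  · rw [le_div_iff₀ h1]; nlinarith
  · rw [div_le_iff₀ h1]; nlinarith

lemma phi5_strictMono : StrictMono phi5 := by
  intro s t hst
  rw [phi5_eq, phi5_eq]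
  have hs := phi5_pos_den s
  have h : Real.exp s + 1 < Real.exp t + 1 := by
    have := Real.exp_lt_exp.mpr hst; linarith
  have : 2 / (Real.exp t + 1) < 2 / (Real.exp s + 1) :=
    div_lt_div_of_pos_left (by norm_num) hs h
  linarith

lemma phi5_continuous : Continuous phi5 := by
  apply Continuous.div (by continuity) (by continuity)
  intro t; exact (phi5_pos_den t).ne'

lemma phi5_tendsto_atTop : Tendsto phi5 atTop (nhds 1) := by
  have h1 : Tendsto (fun t : ℝ => Real.exp t + 1) atTop atTop :=
    tendsto_atTop_add_const_right _ 1 Real.tendsto_exp_atTop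
  have h2 : Tendsto (fun t : ℝ => 2 / (Real.exp t + 1)) atTop (nhds 0) :=
    Tendsto.div_atTop tendsto_const_nhds h1
  have h3 := (tendsto_const_nhds (x := (1:ℝ)) (f := atTop)).sub h2
  rw [show phi5 = fun t => 1 - 2 / (Real.exp t + 1) from funext phi5_eq]
  simpa using h3

lemma phi5_tendsto_atBot : Tendsto phi5 atBot (nhds (-1)) := by
  have h0 : Tendsto Real.exp atBot (nhds 0) := Real.tendsto_exp_atBot
  have : Tendsto phi5 atBot (nhds ((0 - 1) / (0 + 1))) := by
    apply Tendsto.div (h0.sub tendsto_const_nhds) (h0.add tendsto_const_nhds)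
    norm_num
  simpa using this

theorem stmt_5 {S : Type*} [MeasurableSpace S] (μ : Measure S) [IsFiniteMeasure μ]
    (hS : 0 < (μ Set.univ).toReal)
    (g : S → ℝ) (hg : Measurable g)
    (hint : ∀ c : ℝ, Integrable
      (fun x => (Real.exp (g x + c) - 1) / (Real.exp (g x + c) + 1)) μ)
    (a : ℝ) (ha : |a| < 1) :
    ∃! c : ℝ,
      ∫ x, (Real.exp (g x + c) - 1) / (Real.exp (g x + c) + 1) ∂μ =
        a * (μ Set.univ).toReal := by
  set M : ℝ := (μ Set.univ).toReal with hM
  set F : ℝ → ℝ := fun c => ∫ x, phi5 (g x + c) ∂μ with hF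
  have hintp : ∀ c, Integrable (fun x => phi5 (g x + c)) μ := hint
  have hμne : μ Set.univ ≠ 0 := by
    intro h; rw [hM, h] at hS; simp at hS
  -- strict mono
  have hmono : StrictMono F := by
    intro c1 c2 hc
    have hpos : 0 < ∫ x, (phi5 (g x + c2) - phi5 (g x + c1)) ∂μ := by
      rw [MeasureTheory.integral_pos_iff_support_of_nonneg]
      · have : Function.support (fun x => phi5 (g x + c2) - phi5 (g x + c1)) = Set.univ := by
          ext x; simp only [Function.mem_support, Set.mem_univ, iff_true]
          have := phi5_strictMono (show g x + c1 < g x + c2 by linarith)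
          intro h; linarith [sub_eq_zero.mp h ▸ this]
        rw [this]
        exact pos_iff_ne_zero.mpr hμne
      · intro x
        have := phi5_strictMono (show g x + c1 < g x + c2 by linarith)
        simp only [Pi.zero_apply]; linarith
      · exact (hintp c2).sub (hintp c1)
    have := MeasureTheory.integral_sub (hintp c2) (hintp c1)
    simp only [hF]
    rw [← sub_pos, ← this]
    exact hpos
  -- continuity
  have hcont : Continuous F := by
    apply MeasureTheory.continuous_of_dominated (bound := fun _ => (1:ℝ))
    · exact fun c => (hintp c).aestronglyMeasurable
    · exact fun c => Filter.Eventually.of_forall fun x => by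
        simpa using phi5_abs_le (g x + c)
    · exact integrable_const 1
    · exact Filter.Eventually.of_forall fun x =>
        phi5_continuous.comp (continuous_const.add continuous_id)
  -- limits
  have hconst : ∀ r : ℝ, ∫ _x, r ∂μ = r * M := by
    intro r; rw [MeasureTheory.integral_const]; simp [hM, mul_comm]; left; rfl
  have htop : Filter.Tendsto F Filter.atTop (nhds M) := by
    have := MeasureTheory.tendsto_integral_filter_of_dominated_convergence
      (μ := μ) (l := Filter.atTop) (F := fun c x => phi5 (g x + c)) (f := fun _ => (1:ℝ))
      (fun _ => (1:ℝ))
      (Filter.Eventually.of_forall fun c => (hintp c).aestronglyMeasurable)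
      (Filter.Eventually.of_forall fun c => Filter.Eventually.of_forall fun x => by
        simpa using phi5_abs_le (g x + c))
      (integrable_const 1)
      (Filter.Eventually.of_forall fun x =>
        phi5_tendsto_atTop.comp (tendsto_atTop_add_const_left _ (g x) Filter.tendsto_id))
    simpa [hF, hconst 1] using this
  have hbot : Filter.Tendsto F Filter.atBot (nhds (-M)) := by
    have := MeasureTheory.tendsto_integral_filter_of_dominated_convergence
      (μ := μ) (l := Filter.atBot) (F := fun c x => phi5 (g x + c)) (f := fun _ => (-1:ℝ))
      (fun _ => (1:ℝ))
      (Filter.Eventually.of_forall fun c => (hintp c).aestronglyMeasurable)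
      (Filter.Eventually.of_forall fun c => Filter.Eventually.of_forall fun x => by
        simpa using phi5_abs_le (g x + c))
      (integrable_const 1)
      (Filter.Eventually.of_forall fun x =>
        phi5_tendsto_atBot.comp (tendsto_atBot_add_const_left _ (g x) Filter.tendsto_id))
    have h2 : ∫ _x, (-1:ℝ) ∂μ = -M := by rw [hconst (-1)]; ring
    rw [h2] at this
    exact this
  -- bounds on a*M
  have habs := abs_lt.mp ha
  have h1 : a * M < M := by nlinarith [habs.2]
  have h2 : -M < a * M := by nlinarith [habs.1]
  -- existence via IVT
  obtain ⟨N2, hN2⟩ := (htop.eventually (eventually_gt_nhds h1)).exists_forall_of_atTop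
  obtain ⟨N1, hN1⟩ := (hbot.eventually (eventually_lt_nhds h2)).exists_forall_of_atBot
  set c1 := min N1 N2
  set c2 := max N1 N2
  have hFc1 : F c1 ≤ a * M := le_of_lt (hN1 c1 (min_le_left _ _))
  have hFc2 : a * M ≤ F c2 := le_of_lt (hN2 c2 (le_max_right _ _))
  have hc12 : c1 ≤ c2 := min_le_max
  obtain ⟨c, _, hc⟩ := intermediate_value_Icc hc12 hcont.continuousOn ⟨hFc1, hFc2⟩
  refine ⟨c, hc, fun y hy => ?_⟩
  exact hmono.injective (hy.trans hc.symm)
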